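/- Let K be a field with char K ≠ 2 and k ∈ K nonzero. Any point (x,y,z) ∈ K³ satisfying F = F_x = F_y = F_z = 0, where F(x,y,z) = x² + y² + z² + x²y²z² + k·x·y·z, must satisfy x² = y² = z². Moreover, if xyz ≠ 0, then additionally x⁴ = y⁴ = z⁴ = 1, 16x² = 16y² = 16z² = k², and k⁴ = 256. -/
import Mathlib


/-- The defining polynomial of the affine surface `W_k`. -/
def Fpoly {K : Type*} [Field K] (k x y z : K) : K :=
  x ^ 2 + y ^ 2 + z ^ 2 + x ^ 2 * y ^ 2 * z ^ 2 + k * x * y * z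

/-- `∂F/∂x`. -/
def Fx {K : Type*} [Field K] (k x y z : K) : K :=
  2 * x + 2 * x * y ^ 2 * z ^ 2 + k * y * z

/-- `∂F/∂y`. -/
def Fy {K : Type*} [Field K] (k x y z : K) : K :=
  2 * y + 2 * x ^ 2 * y * z ^ 2 + k * x * z

/-- `∂F/∂z`. -/
def Fz {K : Type*} [Field K] (k x y z : K) : K :=
  2 * z + 2 * x ^ 2 * y ^ 2 * z + k * x * y

/-- Common zeros of `F, F_x, F_y, F_z` on `W_k` (with `char K ≠ 2`, `k ≠ 0`)
satisfy `x² = y² = z²`; and if `xyz ≠ 0` then moreover `x⁴ = y⁴ = z⁴ = 1`,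
`16x² = 16y² = 16z² = k²` and `k⁴ = 256`. -/
theorem stmt_5 {K : Type*} [Field K] (h2 : (2 : K) ≠ 0) (k : K) (hk : k ≠ 0)
    (x y z : K)
    (hF : Fpoly k x y z = 0) (hFx : Fx k x y z = 0)
    (hFy : Fy k x y z = 0) (hFz : Fz k x y z = 0) :
    (x ^ 2 = y ^ 2 ∧ x ^ 2 = z ^ 2 ∧ y ^ 2 = z ^ 2) ∧
    (x * y * z ≠ 0 →
      (x ^ 4 = 1 ∧ y ^ 4 = 1 ∧ z ^ 4 = 1) ∧
      (16 * x ^ 2 = k ^ 2 ∧ 16 * y ^ 2 = k ^ 2 ∧ 16 * z ^ 2 = k ^ 2) ∧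
      k ^ 4 = 256) := by

  simp only [Fpoly, Fx, Fy, Fz] at hF hFx hFy hFz
  have hxy : x ^ 2 = y ^ 2 :=
    mul_left_cancel₀ h2 (by linear_combination x * hFx - y * hFy)
  have hxz : x ^ 2 = z ^ 2 :=
    mul_left_cancel₀ h2 (by linear_combination x * hFx - z * hFz)
  have hyz : y ^ 2 = z ^ 2 := hxy ▸ hxz
  refine ⟨⟨hxy, hxz, hyz⟩, fun hxyz => ?_⟩
  have hx : x ≠ 0 := fun h => hxyz (by simp [h])
  have hx2 : x ^ 2 ≠ 0 := pow_ne_zero 2 hx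
  have hx4 : x ^ 4 = 1 := by
    have h0 : x ^ 2 * (1 - x ^ 4) = 0 := by
      linear_combination hF - x * hFx + (1 - x ^ 2 * z ^ 2) * hxy + (1 - x ^ 4) * hxz
    have := (mul_eq_zero.mp h0).resolve_left hx2
    linear_combination -this
  have hy4 : y ^ 4 = 1 := by
    linear_combination hx4 - (x ^ 2 + y ^ 2) * hxy
  have hz4 : z ^ 4 = 1 := by
    linear_combination hx4 - (x ^ 2 + z ^ 2) * hxz
  have hkx : k * (x * y * z) = -(4 * x ^ 2) := by
    linear_combination x * hFx - 2 * x ^ 2 * hx4 + 2 * x ^ 4 * hxy + 2 * x ^ 2 * y ^ 2 * hxz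
  have h16 : k ^ 2 * x ^ 2 = 16 := by
    have hsq : (k * (x * y * z)) ^ 2 = (-(4 * x ^ 2)) ^ 2 := by rw [hkx]
    linear_combination hsq + k ^ 2 * x ^ 4 * hxy + k ^ 2 * x ^ 2 * y ^ 2 * hxz - (k ^ 2 * x ^ 2 - 16) * hx4
  have hkx2 : 16 * x ^ 2 = k ^ 2 := by
    linear_combination k ^ 2 * hx4 - x ^ 2 * h16
  refine ⟨⟨hx4, hy4, hz4⟩, ⟨hkx2, by linear_combination hkx2 - 16 * hxy, by linear_combination hkx2 - 16 * hxz⟩, ?_⟩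
  linear_combination (k ^ 2 * x ^ 2 + 16) * h16 - k ^ 4 * hx4
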